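/- Let 𝒴 ⊆ ℂⁿ be a p-dimensional subspace with Ritz values η₁ ≥ ⋯ ≥ η_p of A in 𝒴, assume η_p > λ_{p+1}, and let f : ℝ → ℝ satisfy |f(λ₁)| ≥ ⋯ ≥ |f(λ_p)| > max_{j ∈ {p+1, …, n}} |f(λⱼ)|. Then 𝒴' = f(A)𝒴 has dimension p, and its smallest (p-th largest) Ritz value η'_p satisfies (λ_p − η'_p)/(η'_p − λ_{p+1}) ≤ ((max_{j ∈ {p+1, …, n}} |f(λⱼ)|)² / |f(λ_p)|²) · (λ_p − η_p)/(η_p − λ_{p+1}); in particular η'_p > λ_{p+1}. -/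

import Mathlib

/-- The Rayleigh quotient `ρ(v) = (vᴴAv)/(vᴴv)` of the Hermitian matrix `A`. -/
noncomputable def rayleigh {n : ℕ} (A : Matrix (Fin n) (Fin n) ℂ)
    (v : EuclideanSpace ℂ (Fin n)) : ℝ :=
  ((inner ℂ v (Matrix.toEuclideanLin A v) : ℂ)).re / ‖v‖ ^ 2

/-- The `i`-th largest Ritz value (1-indexed, `i ∈ {1, …, dim S}`) of the Hermitian
matrix `A` in the subspace `S`, characterized via the Courant–Fischer max-min
principle applied inside `S` (equivalently, the `i`-th largest eigenvalue of
`SᴴAS` for any orthonormal basis matrix `S`). -/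
noncomputable def ritzValue {n : ℕ} (A : Matrix (Fin n) (Fin n) ℂ)
    (S : Submodule ℂ (EuclideanSpace ℂ (Fin n))) (i : ℕ) : ℝ :=
  sSup {r : ℝ | ∃ T : Submodule ℂ (EuclideanSpace ℂ (Fin n)), T ≤ S ∧
    Module.finrank ℂ T = i ∧ ∀ v ∈ T, v ≠ 0 → r ≤ rayleigh A v}

/-- `f(A) = ∑ j, f(λ_j) x_j x_jᴴ` as a linear operator, for eigenvalues `lam`
and orthonormal eigenvectors `x` of `A`. -/
noncomputable def matFun {n : ℕ} (lam : Fin n → ℝ)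
    (x : Fin n → EuclideanSpace ℂ (Fin n)) (f : ℝ → ℝ) :
    EuclideanSpace ℂ (Fin n) →ₗ[ℂ] EuclideanSpace ℂ (Fin n) :=
  ∑ j : Fin n, (f (lam j) : ℂ) • ((innerSL ℂ (x j)).toLinearMap.smulRight (x j))

/-- `y` is a Ritz vector of `A` in `S` associated with the Ritz value `η`:
`y ∈ S`, `y ≠ 0`, `ρ(y) = η` and `Ay − ηy ⊥ S`. -/
def IsRitzVector {n : ℕ} (A : Matrix (Fin n) (Fin n) ℂ)
    (S : Submodule ℂ (EuclideanSpace ℂ (Fin n))) (η : ℝ)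
    (y : EuclideanSpace ℂ (Fin n)) : Prop :=
  y ∈ S ∧ y ≠ 0 ∧ rayleigh A y = η ∧
    ∀ v ∈ S, (inner ℂ v (Matrix.toEuclideanLin A y - (η : ℂ) • y) : ℂ) = 0



lemma ritzValue_le_rayleigh {n : ℕ} (A : Matrix (Fin n) (Fin n) ℂ)
    (S : Submodule ℂ (EuclideanSpace ℂ (Fin n))) (p : ℕ)
    (hS : Module.finrank ℂ S = p)
    (r₀ : ℝ) (hr₀ : ∀ v ∈ S, v ≠ 0 → r₀ ≤ rayleigh A v)
    {y : EuclideanSpace ℂ (Fin n)} (hy : y ∈ S) (hy0 : y ≠ 0) :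
    ritzValue A S p ≤ rayleigh A y := by
  have hmem : r₀ ∈ {r : ℝ | ∃ T : Submodule ℂ (EuclideanSpace ℂ (Fin n)), T ≤ S ∧
      Module.finrank ℂ T = p ∧ ∀ v ∈ T, v ≠ 0 → r ≤ rayleigh A v} := ⟨S, le_refl S, hS, hr₀⟩
  apply csSup_le ⟨r₀, hmem⟩
  rintro r ⟨T, hTS, hT, h⟩
  have hTeq : T = S := Submodule.eq_of_le_of_finrank_eq hTS (by rw [hT, hS])
  exact h y (hTeq ▸ hy) hy0

lemma le_ritzValue {n : ℕ} (A : Matrix (Fin n) (Fin n) ℂ)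
    (S : Submodule ℂ (EuclideanSpace ℂ (Fin n))) (p : ℕ) (hp : 0 < p)
    (hS : Module.finrank ℂ S = p)
    (M : ℝ) (hM : ∀ v : EuclideanSpace ℂ (Fin n), v ≠ 0 → rayleigh A v ≤ M)
    (r : ℝ) (hr : ∀ v ∈ S, v ≠ 0 → r ≤ rayleigh A v) :
    r ≤ ritzValue A S p := by
  apply le_csSup
  · refine ⟨M, ?_⟩
    rintro r' ⟨T, hTS, hT, h⟩
    have : T ≠ ⊥ := by
      intro hbot
      rw [hbot, finrank_bot] at hT
      omega
    obtain ⟨v, hvT, hv0⟩ := Submodule.exists_mem_ne_zero_of_ne_bot this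
    exact le_trans (h v hvT hv0) (hM v hv0)
  · exact ⟨S, le_refl S, hS, hr⟩

variable {n : ℕ}

lemma norm_sq_coords (b : OrthonormalBasis (Fin n) ℂ (EuclideanSpace ℂ (Fin n)))
    (v : EuclideanSpace ℂ (Fin n)) : ‖v‖ ^ 2 = ∑ j, ‖b.repr v j‖ ^ 2 := by
  rw [← b.repr.norm_map v, EuclideanSpace.norm_eq,
    Real.sq_sqrt (Finset.sum_nonneg fun j _ => by positivity)]

lemma repr_A (b : OrthonormalBasis (Fin n) ℂ (EuclideanSpace ℂ (Fin n)))
    (A : Matrix (Fin n) (Fin n) ℂ) (hA : A.IsHermitian)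
    (lam : Fin n → ℝ) (x : Fin n → EuclideanSpace ℂ (Fin n))
    (hb : ∀ j, b j = x j)
    (heig : ∀ j, Matrix.toEuclideanLin A (x j) = (lam j : ℂ) • x j)
    (v : EuclideanSpace ℂ (Fin n)) (j : Fin n) :
    b.repr (Matrix.toEuclideanLin A v) j = (lam j : ℂ) * b.repr v j := by
  have hsymm := Matrix.isHermitian_iff_isSymmetric.1 hA
  rw [b.repr_apply_apply, hb, ← hsymm (x j) v, heig, inner_smul_left,
    Complex.conj_ofReal, b.repr_apply_apply, hb]

lemma inner_A_re (b : OrthonormalBasis (Fin n) ℂ (EuclideanSpace ℂ (Fin n)))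
    (A : Matrix (Fin n) (Fin n) ℂ) (hA : A.IsHermitian)
    (lam : Fin n → ℝ) (x : Fin n → EuclideanSpace ℂ (Fin n))
    (hb : ∀ j, b j = x j)
    (heig : ∀ j, Matrix.toEuclideanLin A (x j) = (lam j : ℂ) • x j)
    (v : EuclideanSpace ℂ (Fin n)) :
    ((inner ℂ v (Matrix.toEuclideanLin A v) : ℂ)).re
      = ∑ j, lam j * ‖b.repr v j‖ ^ 2 := by
  rw [← b.sum_inner_mul_inner v (Matrix.toEuclideanLin A v)]
  rw [Complex.re_sum]
  apply Finset.sum_congr rfl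
  intro j _
  have h1 : (inner ℂ (b j) (Matrix.toEuclideanLin A v) : ℂ)
      = (lam j : ℂ) * b.repr v j := by
    rw [← b.repr_apply_apply]; exact repr_A b A hA lam x hb heig v j
  have h2 : (inner ℂ v (b j) : ℂ) = starRingEnd ℂ (b.repr v j) := by
    rw [b.repr_apply_apply, inner_conj_symm]
  rw [h1, h2]
  have : starRingEnd ℂ (b.repr v j) * ((lam j : ℂ) * b.repr v j)
      = (lam j : ℂ) * (starRingEnd ℂ (b.repr v j) * b.repr v j) := by ring
  rw [this, RCLike.conj_mul]
  simp only [Complex.mul_re, Complex.ofReal_re, Complex.ofReal_im, zero_mul, sub_zero]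
  norm_cast

lemma repr_matFun (b : OrthonormalBasis (Fin n) ℂ (EuclideanSpace ℂ (Fin n)))
    (lam : Fin n → ℝ) (x : Fin n → EuclideanSpace ℂ (Fin n))
    (hx : Orthonormal ℂ x) (hb : ∀ j, b j = x j) (f : ℝ → ℝ)
    (v : EuclideanSpace ℂ (Fin n)) (j : Fin n) :
    b.repr (matFun lam x f v) j = (f (lam j) : ℂ) * b.repr v j := by
  have hexp : matFun lam x f v
      = ∑ i : Fin n, (f (lam i) : ℂ) • ((inner ℂ (x i) v : ℂ) • x i) := by
    simp [matFun, LinearMap.sum_apply]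
  rw [b.repr_apply_apply, hb, hexp, inner_sum]
  have hite := orthonormal_iff_ite.1 hx
  simp only [inner_smul_right, hite]
  rw [Finset.sum_eq_single j]
  · simp [b.repr_apply_apply, hb]
  · intro i _ hij
    simp [Ne.symm hij]
  · simp

lemma key_sums {n p : ℕ} (lam g a : Fin n → ℝ) (μ ν' K F ν : ℝ)
    (ha : ∀ j, 0 ≤ a j)
    (hg1 : ∀ j : Fin n, (j : ℕ) < p → F ^ 2 ≤ g j)
    (hg2 : ∀ j : Fin n, p ≤ (j : ℕ) → g j ≤ ν ^ 2)
    (hg0 : ∀ j, 0 ≤ g j)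
    (hμ : ∀ j : Fin n, (j : ℕ) < p → μ ≤ lam j)
    (hν' : ∀ j : Fin n, p ≤ (j : ℕ) → lam j ≤ ν')
    (hμν : ν' ≤ μ) (hK : 0 ≤ K) (hF : 0 < F) (hνF : ν ^ 2 ≤ F ^ 2)
    (hND : ∑ j, (μ - lam j) * a j ≤ K * ∑ j, (lam j - ν') * a j) :
    (∑ j, (μ - lam j) * (g j * a j) ≤
      ν ^ 2 / F ^ 2 * K * ∑ j, (lam j - ν') * (g j * a j)) ∧
    F ^ 2 * ∑ j, (lam j - ν') * a j ≤ ∑ j, (lam j - ν') * (g j * a j) := by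
  classical
  set P : Finset (Fin n) := Finset.univ.filter (fun j => (j : ℕ) < p) with hP
  have hsplit : ∀ h : Fin n → ℝ, ∑ j, h j = ∑ j ∈ P, h j + ∑ j ∈ Pᶜ, h j := by
    intro h
    rw [Finset.sum_add_sum_compl]
  have hmemP : ∀ j ∈ P, (j : ℕ) < p := by intro j hj; simpa [hP] using hj
  have hmemPc : ∀ j ∈ Pᶜ, p ≤ (j : ℕ) := by
    intro j hj
    simp only [hP, Finset.mem_compl, Finset.mem_filter, Finset.mem_univ, true_and] at hj
    omega
  set Nm := ∑ j ∈ P, (μ - lam j) * a j with hNm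
  set Np := ∑ j ∈ Pᶜ, (μ - lam j) * a j with hNp
  set Dp := ∑ j ∈ P, (lam j - ν') * a j with hDp
  set Dm := ∑ j ∈ Pᶜ, (lam j - ν') * a j with hDm
  have hNm0 : Nm ≤ 0 := Finset.sum_nonpos fun j hj =>
    mul_nonpos_of_nonpos_of_nonneg (by linarith [hμ j (hmemP j hj)]) (ha j)
  have hNp0 : 0 ≤ Np := Finset.sum_nonneg fun j hj =>
    mul_nonneg (by linarith [hν' j (hmemPc j hj)]) (ha j)
  have hDp0 : 0 ≤ Dp := Finset.sum_nonneg fun j hj =>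
    mul_nonneg (by linarith [hμ j (hmemP j hj)]) (ha j)
  have hDm0 : Dm ≤ 0 := Finset.sum_nonpos fun j hj =>
    mul_nonpos_of_nonpos_of_nonneg (by linarith [hν' j (hmemPc j hj)]) (ha j)
  have hND' : Nm + Np ≤ K * (Dp + Dm) := by
    rw [← hsplit, ← hsplit] at *; exact hND
  -- termwise bounds
  have hN' : ∑ j, (μ - lam j) * (g j * a j) ≤ F ^ 2 * Nm + ν ^ 2 * Np := by
    rw [hsplit (fun j => (μ - lam j) * (g j * a j)), hNm, hNp, Finset.mul_sum, Finset.mul_sum]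
    apply add_le_add
    · apply Finset.sum_le_sum
      intro j hj
      have h1 := hg1 j (hmemP j hj); have h2 := hμ j (hmemP j hj); have := ha j
      nlinarith [mul_nonneg (mul_nonneg (by linarith : (0:ℝ) ≤ lam j - μ)
        (by linarith : (0:ℝ) ≤ g j - F ^ 2)) this]
    · apply Finset.sum_le_sum
      intro j hj
      have h1 := hg2 j (hmemPc j hj); have h2 := hν' j (hmemPc j hj)
      have ha' := ha j; have hg' := hg0 j
      nlinarith [mul_nonneg (mul_nonneg (by linarith : (0:ℝ) ≤ μ - lam j)
        (by linarith : (0:ℝ) ≤ ν ^ 2 - g j)) ha']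
  have hD' : F ^ 2 * Dp + ν ^ 2 * Dm ≤ ∑ j, (lam j - ν') * (g j * a j) := by
    rw [hsplit (fun j => (lam j - ν') * (g j * a j)), hDp, hDm, Finset.mul_sum, Finset.mul_sum]
    apply add_le_add
    · apply Finset.sum_le_sum
      intro j hj
      have h1 := hg1 j (hmemP j hj); have h2 := hμ j (hmemP j hj); have := ha j
      nlinarith [mul_nonneg (mul_nonneg (by linarith : (0:ℝ) ≤ lam j - ν')
        (by linarith : (0:ℝ) ≤ g j - F ^ 2)) this]
    · apply Finset.sum_le_sum
      intro j hj
      have h1 := hg2 j (hmemPc j hj); have h2 := hν' j (hmemPc j hj)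
      have ha' := ha j; have hg' := hg0 j
      nlinarith [mul_nonneg (mul_nonneg (by linarith : (0:ℝ) ≤ ν' - lam j)
        (by linarith : (0:ℝ) ≤ ν ^ 2 - g j)) ha']
  have hF2 : (0:ℝ) < F ^ 2 := by positivity
  clear_value Nm Np Dp Dm
  constructor
  · apply le_trans hN'
    have step : F ^ 2 * Nm + ν ^ 2 * Np ≤ ν ^ 2 / F ^ 2 * K * (F ^ 2 * Dp + ν ^ 2 * Dm) := by
      have h1 : ν ^ 2 * Np ≤ ν ^ 2 * (K * (Dp + Dm) - Nm) :=
        mul_le_mul_of_nonneg_left (by linarith) (sq_nonneg ν)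
      have hKDm : K * Dm ≤ 0 := mul_nonpos_of_nonneg_of_nonpos hK hDm0
      have h1t : 0 ≤ 1 - ν ^ 2 / F ^ 2 := by
        rw [sub_nonneg]; exact (div_le_one hF2).2 hνF
      have hL : (F ^ 2 - ν ^ 2) * Nm ≤ 0 :=
        mul_nonpos_of_nonneg_of_nonpos (by linarith) hNm0
      have hR : 0 ≤ (1 - ν ^ 2 / F ^ 2) * ν ^ 2 * (-(K * Dm)) :=
        mul_nonneg (mul_nonneg h1t (sq_nonneg ν)) (by linarith)
      have hring : ν ^ 2 / F ^ 2 * ν ^ 2 * (K * Dm) - ν ^ 2 * (K * Dm)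
          = (1 - ν ^ 2 / F ^ 2) * ν ^ 2 * (-(K * Dm)) := by ring
      have key : (F ^ 2 - ν ^ 2) * Nm
          ≤ ν ^ 2 / F ^ 2 * ν ^ 2 * (K * Dm) - ν ^ 2 * (K * Dm) := by linarith
      have hexp : ν ^ 2 / F ^ 2 * K * (F ^ 2 * Dp + ν ^ 2 * Dm)
          = ν ^ 2 * K * Dp + ν ^ 2 / F ^ 2 * ν ^ 2 * (K * Dm) := by
        field_simp
      have h1' : ν ^ 2 * (K * (Dp + Dm) - Nm)
          = ν ^ 2 * K * Dp + ν ^ 2 * (K * Dm) - ν ^ 2 * Nm := by ring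
      rw [hexp]
      nlinarith [key, h1, h1']
    have hc : 0 ≤ ν ^ 2 / F ^ 2 * K := by positivity
    have final := mul_le_mul_of_nonneg_left hD' hc
    linarith
  · have e1 : ∑ j, (lam j - ν') * a j = Dp + Dm := by
      rw [hDp, hDm]; exact hsplit _
    rw [e1]
    refine le_trans ?_ hD'
    have hDm2 : (F ^ 2 - ν ^ 2) * Dm ≤ 0 :=
      mul_nonpos_of_nonneg_of_nonpos (by linarith) hDm0
    have e2 : F ^ 2 * (Dp + Dm) = F ^ 2 * Dp + F ^ 2 * Dm := by ring
    have e3 : (F ^ 2 - ν ^ 2) * Dm = F ^ 2 * Dm - ν ^ 2 * Dm := by ring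
    linarith [hDm2, e2, e3]

set_option maxHeartbeats 1000000 in
/-- (Basic angle-free bound.) If `η_p > λ_{p+1}` and
`|f(λ₁)| ≥ ⋯ ≥ |f(λ_p)| > ν_p = max_{j>p} |f(λ_j)|`, then `𝒴' = f(A)𝒴` has
dimension `p` and its smallest Ritz value `η'_p` satisfies `η'_p > λ_{p+1}` and
`(λ_p − η'_p)/(η'_p − λ_{p+1}) ≤ (ν_p²/|f(λ_p)|²)·(λ_p − η_p)/(η_p − λ_{p+1})`.
(0-indexed: `lam ⟨j⟩` is `λ_{j+1}`.) -/
theorem stmt7 {n p : ℕ} (hp : 0 < p) (hpn : p < n)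
    (A : Matrix (Fin n) (Fin n) ℂ) (hA : A.IsHermitian)
    (lam : Fin n → ℝ) (hlam : Antitone lam)
    (x : Fin n → EuclideanSpace ℂ (Fin n)) (hx : Orthonormal ℂ x)
    (heig : ∀ j, Matrix.toEuclideanLin A (x j) = (lam j : ℂ) • x j)
    (Y : Submodule ℂ (EuclideanSpace ℂ (Fin n))) (hY : Module.finrank ℂ Y = p)
    (hηp : lam ⟨p, hpn⟩ < ritzValue A Y p)
    (f : ℝ → ℝ) (νp : ℝ)
    (hνp : IsGreatest ((fun j => |f (lam j)|) '' {j : Fin n | p ≤ (j : ℕ)}) νp)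
    (hmono : ∀ j k : Fin n, (j : ℕ) ≤ (k : ℕ) → (k : ℕ) < p →
      |f (lam k)| ≤ |f (lam j)|)
    (hgt : νp < |f (lam ⟨p - 1, by omega⟩)|) :
    Module.finrank ℂ (Y.map (matFun lam x f)) = p ∧
    lam ⟨p, hpn⟩ < ritzValue A (Y.map (matFun lam x f)) p ∧
    (lam ⟨p - 1, by omega⟩ - ritzValue A (Y.map (matFun lam x f)) p) /
        (ritzValue A (Y.map (matFun lam x f)) p - lam ⟨p, hpn⟩) ≤
      νp ^ 2 / |f (lam ⟨p - 1, by omega⟩)| ^ 2 *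
        ((lam ⟨p - 1, by omega⟩ - ritzValue A Y p) /
          (ritzValue A Y p - lam ⟨p, hpn⟩)) := by
  classical
  haveI : Nonempty (Fin n) := ⟨⟨0, by omega⟩⟩
  -- orthonormal basis
  have hsp : ⊤ ≤ Submodule.span ℂ (Set.range x) := by
    rw [hx.linearIndependent.span_eq_top_of_card_eq_finrank (by simp)]
  set b : OrthonormalBasis (Fin n) ℂ (EuclideanSpace ℂ (Fin n)) :=
    OrthonormalBasis.mk hx hsp with hbdef
  have hb : ∀ j, b j = x j := fun j => by
    rw [hbdef, OrthonormalBasis.coe_mk]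
  -- coordinates
  set a : EuclideanSpace ℂ (Fin n) → Fin n → ℝ :=
    fun v j => ‖b.repr v j‖ ^ 2 with hadef
  have ha0 : ∀ v j, 0 ≤ a v j := fun v j => by positivity
  have hA1 : ∀ v, ‖v‖ ^ 2 = ∑ j, a v j := fun v => norm_sq_coords b v
  have hA2 : ∀ v, ((inner ℂ v (Matrix.toEuclideanLin A v) : ℂ)).re
      = ∑ j, lam j * a v j := fun v => inner_A_re b A hA lam x hb heig v
  have hA3 : ∀ v j, a (matFun lam x f v) j = f (lam j) ^ 2 * a v j := by
    intro v j
    rw [hadef]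
    simp only
    rw [repr_matFun b lam x hx hb f v j, norm_mul, mul_pow]
    norm_cast
    rw [Real.norm_eq_abs, sq_abs]
  have hray : ∀ v, rayleigh A v = (∑ j, lam j * a v j) / (∑ j, a v j) := by
    intro v; rw [rayleigh, hA2, hA1]
  have hs0 : ∀ v : EuclideanSpace ℂ (Fin n), v ≠ 0 → 0 < ∑ j, a v j := by
    intro v hv
    rw [← hA1]
    have : 0 < ‖v‖ := norm_pos_iff.2 hv
    positivity
  -- global bounds on the Rayleigh quotient
  set M : ℝ := lam ⟨0, by omega⟩ with hMdef
  set r₀ : ℝ := lam ⟨n - 1, by omega⟩ with hr₀def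
  have hrle : ∀ v : EuclideanSpace ℂ (Fin n), v ≠ 0 → rayleigh A v ≤ M := by
    intro v hv
    rw [hray, div_le_iff₀ (hs0 v hv), Finset.mul_sum]
    apply Finset.sum_le_sum
    intro j _
    exact mul_le_mul_of_nonneg_right (hlam (by simp [Fin.le_def])) (ha0 v j)
  have hrge : ∀ v : EuclideanSpace ℂ (Fin n), v ≠ 0 → r₀ ≤ rayleigh A v := by
    intro v hv
    rw [hray, le_div_iff₀ (hs0 v hv), Finset.mul_sum]
    apply Finset.sum_le_sum
    intro j _
    refine mul_le_mul_of_nonneg_right (hlam ?_) (ha0 v j)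
    simp only [Fin.le_def]
    omega
  -- notation
  set μ : ℝ := lam ⟨p - 1, by omega⟩ with hμdef
  set νs : ℝ := lam ⟨p, hpn⟩ with hνsdef
  set F : ℝ := |f (lam ⟨p - 1, by omega⟩)| with hFdef
  set η : ℝ := ritzValue A Y p with hηdef
  -- η is a lower bound of rayleigh on Y
  have hηle : ∀ y ∈ Y, y ≠ 0 → η ≤ rayleigh A y := fun y hy hy0 =>
    ritzValue_le_rayleigh A Y p hY r₀ (fun v _ hv0 => hrge v hv0) hy hy0
  -- η ≤ μ  (Courant-Fischer type bound)
  have hημ : η ≤ μ := by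
    set ℓ : EuclideanSpace ℂ (Fin n) →ₗ[ℂ] (Fin (p - 1) → ℂ) :=
      LinearMap.pi (fun i : Fin (p - 1) =>
        (LinearMap.proj (Fin.castLE (show p - 1 ≤ n by omega) i)) ∘ₗ
          (WithLp.linearEquiv 2 ℂ (Fin n → ℂ)).toLinearMap ∘ₗ
          (b.repr.toLinearEquiv.toLinearMap)) with hℓdef
    have hker : LinearMap.ker (ℓ ∘ₗ Y.subtype) ≠ ⊥ := by
      apply LinearMap.ker_ne_bot_of_finrank_lt
      rw [hY, Module.finrank_fin_fun]
      omega
    obtain ⟨y₀, hy₀mem, hy₀ne⟩ := Submodule.exists_mem_ne_zero_of_ne_bot hker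
    have hy₀Y : (y₀ : EuclideanSpace ℂ (Fin n)) ∈ Y := y₀.2
    have hy₀0 : (y₀ : EuclideanSpace ℂ (Fin n)) ≠ 0 := by
      intro h
      exact hy₀ne (Subtype.ext h)
    have hcoord : ∀ j : Fin n, (j : ℕ) < p - 1 → b.repr (y₀ : _) j = 0 := by
      intro j hj
      have h0 : ℓ (y₀ : _) = 0 := by
        have := hy₀mem
        rw [LinearMap.mem_ker] at this
        exact this
      have := congrFun h0 ⟨(j : ℕ), hj⟩
      simpa [hℓdef, Fin.ext_iff] using this
    have hr : rayleigh A (y₀ : _) ≤ μ := by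
      rw [hray, div_le_iff₀ (hs0 _ hy₀0), Finset.mul_sum]
      apply Finset.sum_le_sum
      intro j _
      by_cases hj : (j : ℕ) < p - 1
      · have : a (y₀ : _) j = 0 := by
          rw [hadef]; simp only; rw [hcoord j hj]; simp
        rw [this]; simp
      · refine mul_le_mul_of_nonneg_right (hlam ?_) (ha0 _ j)
        simp only [Fin.le_def]
        omega
    exact le_trans (hηle _ hy₀Y hy₀0) hr
  -- positivity facts
  have hν0 : 0 ≤ νp := by
    obtain ⟨j₀, _, hj₀⟩ := hνp.1
    rw [← hj₀]; positivity
  have hF0 : 0 < F := lt_of_le_of_lt hν0 hgt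
  have hνF : νp ^ 2 ≤ F ^ 2 := by nlinarith
  have hημν : νs < η := hηp
  have hμνs : νs < μ := lt_of_lt_of_le hημν hημ
  set K : ℝ := (μ - η) / (η - νs) with hKdef
  have hK0 : 0 ≤ K := div_nonneg (by linarith) (by linarith)
  set K' : ℝ := νp ^ 2 / F ^ 2 * K with hK'def
  have hK'0 : 0 ≤ K' := by positivity
  set r : ℝ := (μ + K' * νs) / (1 + K') with hrdef
  have h1K' : (0:ℝ) < 1 + K' := by linarith
  have hr1 : r * (1 + K') = μ + K' * νs := div_mul_cancel₀ _ (ne_of_gt h1K')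
  have hνsr : νs < r := by
    rw [hrdef, lt_div_iff₀ h1K']
    nlinarith
  clear_value b a M r₀ μ νs F η K K' r
  -- spectral weight bounds
  have hg1 : ∀ j : Fin n, (j : ℕ) < p → F ^ 2 ≤ f (lam j) ^ 2 := by
    intro j hj
    have h := hmono j ⟨p - 1, by omega⟩ (by simp; omega) (by simp; omega)
    rw [← sq_abs (f (lam j)), hFdef]
    exact pow_le_pow_left₀ (abs_nonneg _) h 2
  have hg2 : ∀ j : Fin n, p ≤ (j : ℕ) → f (lam j) ^ 2 ≤ νp ^ 2 := by
    intro j hj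
    have h := hνp.2 ⟨j, hj, rfl⟩
    rw [← sq_abs (f (lam j))]
    exact pow_le_pow_left₀ (abs_nonneg _) h 2
  have hg0 : ∀ j : Fin n, (0:ℝ) ≤ f (lam j) ^ 2 := fun j => sq_nonneg _
  have hμj : ∀ j : Fin n, (j : ℕ) < p → μ ≤ lam j := by
    intro j hj
    rw [hμdef]
    exact hlam (by simp [Fin.le_def]; omega)
  have hνj : ∀ j : Fin n, p ≤ (j : ℕ) → lam j ≤ νs := by
    intro j hj
    rw [hνsdef]
    exact hlam (by simp [Fin.le_def]; omega)
  -- injectivity of matFun on Y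
  have hinj : ∀ y ∈ Y, matFun lam x f y = 0 → y = 0 := by
    intro y hy h0
    by_contra hy0
    have hcoord : ∀ j : Fin n, (j : ℕ) < p → b.repr y j = 0 := by
      intro j hj
      have h1 : b.repr (matFun lam x f y) j = 0 := by rw [h0]; simp
      rw [repr_matFun b lam x hx hb f y j] at h1
      have hf0 : (f (lam j) : ℂ) ≠ 0 := by
        simp only [ne_eq, Complex.ofReal_eq_zero]
        intro hz
        have := hg1 j hj
        rw [hz] at this
        nlinarith
      exact (mul_eq_zero.1 h1).resolve_left hf0
    have hr : rayleigh A y ≤ νs := by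
      rw [hray, div_le_iff₀ (hs0 _ hy0), Finset.mul_sum]
      apply Finset.sum_le_sum
      intro j _
      by_cases hj : (j : ℕ) < p
      · have : a y j = 0 := by
          rw [hadef]; simp only; rw [hcoord j hj]; simp
        rw [this]; simp
      · exact mul_le_mul_of_nonneg_right (hνj j (by omega)) (ha0 y j)
    have := hηle y hy hy0
    linarith
  -- dimension of the image
  have hfin : Module.finrank ℂ (Y.map (matFun lam x f)) = p := by
    have hinj' : Function.Injective ((matFun lam x f) ∘ₗ Y.subtype) := by
      rw [← LinearMap.ker_eq_bot]
      rw [Submodule.eq_bot_iff]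
      rintro ⟨y, hyY⟩ hy
      rw [LinearMap.mem_ker] at hy
      have : matFun lam x f y = 0 := hy
      exact Subtype.ext (hinj y hyY this)
    have hrange : LinearMap.range ((matFun lam x f) ∘ₗ Y.subtype)
        = Y.map (matFun lam x f) := by
      rw [LinearMap.range_comp, Submodule.range_subtype]
    rw [← hrange, LinearMap.finrank_range_of_inj hinj', hY]
  -- per-vector inequality on Y
  have hNDy : ∀ y ∈ Y, y ≠ 0 →
      (∑ j, (μ - lam j) * a y j ≤ K * ∑ j, (lam j - νs) * a y j) ∧
      (η - νs) * (∑ j, a y j) ≤ ∑ j, (lam j - νs) * a y j := by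
    intro y hy hy0
    have hs := hs0 y hy0
    have hq : η * (∑ j, a y j) ≤ ∑ j, lam j * a y j := by
      have h := hηle y hy hy0
      rw [hray, le_div_iff₀ hs] at h
      exact h
    have hNid : ∑ j, (μ - lam j) * a y j
        = μ * (∑ j, a y j) - ∑ j, lam j * a y j := by
      rw [Finset.mul_sum, ← Finset.sum_sub_distrib]
      apply Finset.sum_congr rfl
      intro j _; ring
    have hDid : ∑ j, (lam j - νs) * a y j
        = (∑ j, lam j * a y j) - νs * (∑ j, a y j) := by
      rw [Finset.mul_sum, ← Finset.sum_sub_distrib]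
      apply Finset.sum_congr rfl
      intro j _; ring
    constructor
    · rw [hNid, hDid]
      have hKmul : K * (η - νs) = μ - η := by
        have hne : η - νs ≠ 0 := by linarith
        rw [hKdef, div_mul_eq_mul_div, mul_div_assoc, div_self hne, mul_one]
      have hDge : (η - νs) * (∑ j, a y j)
          ≤ (∑ j, lam j * a y j) - νs * (∑ j, a y j) := by nlinarith
      have := mul_le_mul_of_nonneg_left hDge hK0
      nlinarith
    · rw [hDid]; nlinarith
  -- per-vector lower bound on the image
  have hlow : ∀ y' ∈ Y.map (matFun lam x f), y' ≠ 0 → r ≤ rayleigh A y' := by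
    rintro y' hy' hy'0
    obtain ⟨y, hyY, rfl⟩ := Submodule.mem_map.1 hy'
    have hy0 : y ≠ 0 := by
      rintro rfl
      exact hy'0 (map_zero _)
    obtain ⟨hND, hDge⟩ := hNDy y hyY hy0
    have hkey := key_sums lam (fun j => f (lam j) ^ 2) (a y) μ νs K F νp
      (ha0 y) hg1 hg2 hg0 hμj hνj (le_of_lt hμνs) hK0 hF0 hνF hND
    have hset : ∀ j, a (matFun lam x f y) j = f (lam j) ^ 2 * a y j := hA3 y
    have hN' : ∑ j, (μ - lam j) * a (matFun lam x f y) j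
        ≤ K' * ∑ j, (lam j - νs) * a (matFun lam x f y) j := by
      simp only [hset]
      rw [hK'def]
      exact hkey.1
    have hD' : F ^ 2 * ∑ j, (lam j - νs) * a y j
        ≤ ∑ j, (lam j - νs) * a (matFun lam x f y) j := by
      simp only [hset]
      exact hkey.2
    have hs := hs0 y hy0
    have hs' := hs0 _ hy'0
    have hDpos : 0 < ∑ j, (lam j - νs) * a (matFun lam x f y) j := by
      have h1 : 0 < (η - νs) * (∑ j, a y j) := by
        apply mul_pos (by linarith) hs
      have h2 : 0 < F ^ 2 * ((η - νs) * ∑ j, a y j) := mul_pos (pow_pos hF0 2) h1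
      have h3 := mul_le_mul_of_nonneg_left hDge (le_of_lt (pow_pos hF0 2))
      linarith
    have hNid : ∑ j, (μ - lam j) * a (matFun lam x f y) j
        = μ * (∑ j, a (matFun lam x f y) j)
          - ∑ j, lam j * a (matFun lam x f y) j := by
      rw [Finset.mul_sum, ← Finset.sum_sub_distrib]
      apply Finset.sum_congr rfl
      intro j _; ring
    have hDid : ∑ j, (lam j - νs) * a (matFun lam x f y) j
        = (∑ j, lam j * a (matFun lam x f y) j)
          - νs * (∑ j, a (matFun lam x f y) j) := by
      rw [Finset.mul_sum, ← Finset.sum_sub_distrib]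
      apply Finset.sum_congr rfl
      intro j _; ring
    rw [hray, le_div_iff₀ hs']
    rw [hNid, hDid] at hN'
    have hr1S : r * (1 + K') * (∑ j, a (matFun lam x f y) j)
        = (μ + K' * νs) * (∑ j, a (matFun lam x f y) j) := by rw [hr1]
    nlinarith [hr1S, hN', hK'0, h1K', hs']
  -- lower bound on the new Ritz value
  have hη'ge : r ≤ ritzValue A (Y.map (matFun lam x f)) p :=
    le_ritzValue A _ p hp hfin M (fun v hv => hrle v hv) r hlow
  set η' : ℝ := ritzValue A (Y.map (matFun lam x f)) p with hη'def
  have hη'νs : νs < η' := lt_of_lt_of_le hνsr hη'ge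
  refine ⟨hfin, hη'νs, ?_⟩
  show (μ - η') / (η' - νs) ≤ K'
  rw [div_le_iff₀ (by linarith)]
  have hK'mul : 0 ≤ K' * (η' - r) := mul_nonneg hK'0 (by linarith)
  nlinarith [hr1, hK'mul, hη'ge]
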